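/- Let f₀ be a probability density on ℝ with distribution function F₀ and let X ~ f₀. If f₀(F₀^{-1}(p)) ≥ α·min(p, 1-p) for all p ∈ (0,1) and some α > 0, then for any t ≥ 2 and n ≥ 1, with probability at least 1 - 2/(α n^{t/2 - 1}) over an i.i.d. sample X₁,…,X_n from f₀, every x in [min_i X_i, max_i X_i] satisfies log(1/f₀(x)) ≤ (t/2) log n, provided additionally that log f₀ is concave on its support. -/

import Mathlib

open MeasureTheory ProbabilityTheory

/-- For a log-concave density `f₀` whose quantile function satisfies
`f₀(F₀⁻¹(p)) ≥ α min(p, 1-p)`, with probability at least `1 - 2/(α n^{t/2-1})` every point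
`x` of the convex hull of an i.i.d. sample of size `n` from `f₀` satisfies
`log (1/f₀ x) ≤ (t/2) log n`. -/
theorem logdensity_bound_on_sample_hull
    (Ω : Type*) [MeasureSpace Ω] [IsProbabilityMeasure (ℙ : Measure Ω)]
    (f₀ : ℝ → ℝ) (hf0 : ∀ x, 0 ≤ f₀ x) (hfi : Integrable f₀) (hf1 : ∫ x, f₀ x = 1)
    (hlc : ∀ x y : ℝ, ∀ s : ℝ, 0 ≤ s → s ≤ 1 →
      f₀ x ^ s * f₀ y ^ (1 - s) ≤ f₀ (s * x + (1 - s) * y))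
    (F₀ : ℝ → ℝ) (hF₀ : F₀ = fun x => ∫ u in Set.Iic x, f₀ u)
    (Finv : ℝ → ℝ) (hFinv : Finv = fun p => sInf {x : ℝ | p ≤ F₀ x})
    (α : ℝ) (hα : 0 < α)
    (hquant : ∀ p ∈ Set.Ioo (0:ℝ) 1, α * min p (1 - p) ≤ f₀ (Finv p))
    (n : ℕ) (hn : 1 ≤ n) (t : ℝ) (ht : 2 ≤ t)
    (X : Fin n → Ω → ℝ) (hXmeas : ∀ i, Measurable (X i))
    (hindep : iIndepFun X ℙ)
    (hlaw : ∀ i, ∀ s : Set ℝ, MeasurableSet s →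
      ℙ (X i ⁻¹' s) = ENNReal.ofReal (∫ x in s, f₀ x)) :
    ENNReal.ofReal (1 - 2 / (α * (n : ℝ) ^ (t / 2 - 1))) ≤
      ℙ {ω : Ω | ∀ x ∈ Set.Icc
          (Finset.univ.inf' ⟨⟨0, hn⟩, Finset.mem_univ _⟩ fun i => X i ω)
          (Finset.univ.sup' ⟨⟨0, hn⟩, Finset.mem_univ _⟩ fun i => X i ω),
        Real.log (1 / f₀ x) ≤ (t / 2) * Real.log n} := by
  classical
  have npos : (0:ℝ) < n := by exact_mod_cast hn
  have hn1 : (1:ℝ) ≤ n := by exact_mod_cast hn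
  by_cases hc0 : 1 - 2 / (α * (n : ℝ) ^ (t / 2 - 1)) ≤ 0
  · rw [ENNReal.ofReal_eq_zero.2 hc0]; exact zero_le
  push_neg at hc0
  set c : ℝ := 2 / (α * (n:ℝ) ^ (t/2 - 1)) with hcdef
  have hnt : (0:ℝ) < (n:ℝ) ^ (t/2) := Real.rpow_pos_of_pos npos _
  set p₀ : ℝ := 1 / (α * (n:ℝ) ^ (t/2)) with hp0def
  have hp0pos : 0 < p₀ := by positivity
  have hc_eq : c = 2 * n * p₀ := by
    rw [hcdef, hp0def, Real.rpow_sub npos, Real.rpow_one]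
    field_simp
  have hclt : c < 1 := by linarith
  have hp0half : p₀ < 1/2 := by nlinarith
  -- basic properties of F₀
  have hF0mono : Monotone F₀ := by
    intro x y hxy
    rw [hF₀]
    exact setIntegral_mono_set hfi.integrableOn (Filter.Eventually.of_forall hf0)
      (HasSubset.Subset.eventuallyLE (Set.Iic_subset_Iic.2 hxy))
  have hF0cont : Continuous F₀ := by
    have heq : F₀ = fun x => (∫ u in Set.Iic (0:ℝ), f₀ u) + ∫ u in (0:ℝ)..x, f₀ u := by
      rw [hF₀]; ext x
      rw [← intervalIntegral.integral_Iic_sub_Iic hfi.integrableOn hfi.integrableOn]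
      ring
    rw [heq]
    exact continuous_const.add (hfi.continuous_primitive 0)
  have htop : Filter.Tendsto (fun k : ℕ => F₀ k) Filter.atTop (nhds 1) := by
    have hU : (⋃ k : ℕ, Set.Iic (k:ℝ)) = Set.univ := by
      ext x; simp only [Set.mem_iUnion, Set.mem_Iic, Set.mem_univ, iff_true]
      exact exists_nat_ge x
    have h := tendsto_setIntegral_of_monotone (μ := volume) (f := f₀)
      (s := fun k : ℕ => Set.Iic (k:ℝ)) (fun k => measurableSet_Iic)
      (fun i j hij => Set.Iic_subset_Iic.2 (by exact_mod_cast hij))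
      (by rw [hU]; exact hfi.integrableOn)
    rw [hU] at h
    simp only [Measure.restrict_univ, hf1] at h
    rw [hF₀]
    exact h
  have hbot : Filter.Tendsto (fun k : ℕ => F₀ (-(k:ℝ))) Filter.atTop (nhds 0) := by
    have hI : (⋂ k : ℕ, Set.Iic (-(k:ℝ))) = ∅ := by
      ext x; simp only [Set.mem_iInter, Set.mem_Iic, Set.mem_empty_iff_false, iff_false, not_forall, not_le]
      obtain ⟨k, hk⟩ := exists_nat_gt (-x)
      exact ⟨k, by linarith⟩
    have h := tendsto_setIntegral_of_antitone (μ := volume) (f := f₀)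
      (s := fun k : ℕ => Set.Iic (-(k:ℝ)))
      (fun k => measurableSet_Iic)
      (fun i j hij => Set.Iic_subset_Iic.2 (by exact_mod_cast neg_le_neg (by exact_mod_cast hij)))
      ⟨0, hfi.integrableOn⟩
    rw [hI] at h
    simp only [Measure.restrict_empty, integral_zero_measure] at h
    rw [hF₀]
    exact h
  -- lower bound point
  obtain ⟨k₀, hk₀⟩ := (hbot.eventually (eventually_lt_nhds hp0pos)).exists
  set x₀ : ℝ := -(k₀:ℝ) with hx₀def
  have hx₀ : F₀ x₀ < p₀ := hk₀
  have hbddS : BddBelow {x : ℝ | p₀ ≤ F₀ x} := by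
    refine ⟨x₀, fun y hy => ?_⟩
    by_contra h
    push_neg at h
    exact absurd (le_trans hy (hF0mono h.le)) (not_le.2 hx₀)
  -- upper existence
  obtain ⟨k₁, hk₁⟩ := (htop.eventually (eventually_gt_nhds (by linarith : 1 - p₀ < 1))).exists
  have hTne : {x : ℝ | 1 - p₀ ≤ F₀ x}.Nonempty := ⟨k₁, hk₁.le⟩
  have hTsubS : {x : ℝ | 1 - p₀ ≤ F₀ x} ⊆ {x : ℝ | p₀ ≤ F₀ x} :=
    by intro y hy; simp only [Set.mem_setOf_eq] at hy ⊢; linarith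
  set a : ℝ := Finv p₀ with hadef
  set b : ℝ := Finv (1 - p₀) with hbdef
  have ha_inf : a = sInf {x : ℝ | p₀ ≤ F₀ x} := by rw [hadef, hFinv]
  have hb_inf : b = sInf {x : ℝ | 1 - p₀ ≤ F₀ x} := by rw [hbdef, hFinv]
  have hab : a ≤ b := by
    rw [ha_inf, hb_inf]
    exact csInf_le_csInf hbddS hTne hTsubS
  -- F₀ a ≤ p₀
  have hFa : F₀ a ≤ p₀ := by
    have hlt : ∀ x, x < a → F₀ x < p₀ := by
      intro x hx
      by_contra h
      push_neg at h
      have : a ≤ x := by rw [ha_inf]; exact csInf_le hbddS h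
      linarith
    have htnd : Filter.Tendsto (fun k : ℕ => F₀ (a - 1/(k+1))) Filter.atTop (nhds (F₀ a)) := by
      have h1 : Filter.Tendsto (fun k : ℕ => a - 1/((k:ℝ)+1)) Filter.atTop (nhds a) := by
        have := tendsto_one_div_add_atTop_nhds_zero_nat (𝕜 := ℝ)
        have h2 := Filter.Tendsto.sub (tendsto_const_nhds (x := a) (f := Filter.atTop (α := ℕ))) this
        simpa using h2
      exact (hF0cont.tendsto a).comp h1
    refine le_of_tendsto htnd (Filter.Eventually.of_forall fun k => (hlt _ ?_).le)
    have hk : (0:ℝ) < 1/((k:ℝ)+1) := by positivity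
    linarith
  -- 1 - p₀ ≤ F₀ b
  have hFb : 1 - p₀ ≤ F₀ b := by
    have hclosed : IsClosed {x : ℝ | 1 - p₀ ≤ F₀ x} := isClosed_le continuous_const hF0cont
    have := hclosed.csInf_mem hTne (hbddS.mono hTsubS)
    rw [← hb_inf] at this
    exact this
  -- density lower bound at endpoints
  set c₀ : ℝ := ((n:ℝ) ^ (t/2))⁻¹ with hc₀def
  have hc₀pos : 0 < c₀ := by positivity
  have hαp₀ : α * p₀ = c₀ := by
    rw [hp0def, hc₀def]
    field_simp
  have hfa : c₀ ≤ f₀ a := by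
    have := hquant p₀ ⟨hp0pos, by linarith⟩
    rw [min_eq_left (by linarith)] at this
    rw [← hαp₀]
    exact this
  have hfb : c₀ ≤ f₀ b := by
    have := hquant (1 - p₀) ⟨by linarith, by linarith⟩
    have hmin : min (1 - p₀) (1 - (1 - p₀)) = p₀ := by
      rw [show (1 : ℝ) - (1 - p₀) = p₀ by ring, min_eq_right (by linarith)]
    rw [hmin] at this
    rw [← hαp₀]
    exact this
  -- lower bound on the whole interval
  have hfx : ∀ x ∈ Set.Icc a b, c₀ ≤ f₀ x := by
    rintro x ⟨hax, hxb⟩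
    by_cases habx : a < b
    · set s : ℝ := (b - x)/(b - a) with hsdef
      have hba : (0:ℝ) < b - a := by linarith
      have hs0 : 0 ≤ s := div_nonneg (by linarith) hba.le
      have hs1 : s ≤ 1 := by rw [hsdef, div_le_one hba]; linarith
      have hx' : s * a + (1 - s) * b = x := by
        rw [hsdef]; field_simp; ring
      have hmain := hlc a b s hs0 hs1
      rw [hx'] at hmain
      calc c₀ = c₀ ^ s * c₀ ^ (1-s) := by
            rw [← Real.rpow_add hc₀pos]; simp
        _ ≤ f₀ a ^ s * f₀ b ^ (1-s) :=
            mul_le_mul (Real.rpow_le_rpow hc₀pos.le hfa hs0)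
              (Real.rpow_le_rpow hc₀pos.le hfb (by linarith))
              (Real.rpow_nonneg hc₀pos.le _) (Real.rpow_nonneg (hf0 a) _)
        _ ≤ f₀ x := hmain
    · have : a = b := le_antisymm hab (not_lt.1 habx)
      have hx : x = a := le_antisymm (this ▸ hxb) hax
      rw [hx]; exact hfa
  -- log bound
  have hlog : ∀ x, c₀ ≤ f₀ x → Real.log (1 / f₀ x) ≤ (t/2) * Real.log n := by
    intro x hx
    have hfxpos : 0 < f₀ x := lt_of_lt_of_le hc₀pos hx
    rw [one_div, Real.log_inv]
    have h1 : Real.log c₀ ≤ Real.log (f₀ x) := Real.log_le_log hc₀pos hx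
    have h2 : Real.log c₀ = -((t/2) * Real.log n) := by
      rw [hc₀def, Real.log_inv, Real.log_rpow npos]
    linarith
  -- the good event
  set E : Set Ω := ⋂ i, X i ⁻¹' (Set.Icc a b) with hEdef
  have hEmeas : MeasurableSet E := MeasurableSet.iInter fun i => (hXmeas i) measurableSet_Icc
  have hsub : E ⊆ {ω : Ω | ∀ x ∈ Set.Icc
          (Finset.univ.inf' ⟨⟨0, hn⟩, Finset.mem_univ _⟩ fun i => X i ω)
          (Finset.univ.sup' ⟨⟨0, hn⟩, Finset.mem_univ _⟩ fun i => X i ω),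
        Real.log (1 / f₀ x) ≤ (t / 2) * Real.log n} := by
    intro ω hω
    rw [hEdef] at hω
    simp only [Set.mem_iInter, Set.mem_preimage, Set.mem_Icc] at hω
    intro x hx
    have h1 : a ≤ Finset.univ.inf' ⟨⟨0, hn⟩, Finset.mem_univ _⟩ fun i => X i ω :=
      Finset.le_inf' _ _ fun i _ => (hω i).1
    have h2 : (Finset.univ.sup' ⟨⟨0, hn⟩, Finset.mem_univ _⟩ fun i => X i ω) ≤ b :=
      Finset.sup'_le _ _ fun i _ => (hω i).2
    exact hlog x (hfx x ⟨h1.trans hx.1, hx.2.trans h2⟩)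
  -- tail probabilities
  have htail : ∀ i, ℙ ((X i ⁻¹' (Set.Icc a b))ᶜ) ≤ ENNReal.ofReal p₀ + ENNReal.ofReal p₀ := by
    intro i
    have hcompl : (X i ⁻¹' (Set.Icc a b))ᶜ = X i ⁻¹' (Set.Iio a) ∪ X i ⁻¹' (Set.Ioi b) := by
      ext ω
      simp only [Set.mem_compl_iff, Set.mem_preimage, Set.mem_Icc, Set.mem_union,
        Set.mem_Iio, Set.mem_Ioi, not_and_or, not_le]
    rw [hcompl]
    refine (measure_union_le _ _).trans (add_le_add ?_ ?_)
    · rw [hlaw i _ measurableSet_Iio]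
      apply ENNReal.ofReal_le_ofReal
      have heq : ∫ x in Set.Iio a, f₀ x = F₀ a := by
        rw [hF₀]
        exact setIntegral_congr_set (Iio_ae_eq_Iic' (measure_singleton a))
      rw [heq]; exact hFa
    · rw [hlaw i _ measurableSet_Ioi]
      apply ENNReal.ofReal_le_ofReal
      have heq : ∫ x in Set.Ioi b, f₀ x = 1 - F₀ b := by
        have h := intervalIntegral.integral_Iic_add_Ioi (b := b) (f := f₀) hfi.integrableOn hfi.integrableOn
        rw [hf1] at h
        rw [hF₀]
        linarith [h, (show (∫ u in Set.Iic b, f₀ u) = F₀ b by rw [hF₀])]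
      rw [heq]; linarith
  -- complement bound
  have hEc : ℙ Eᶜ ≤ ENNReal.ofReal c := by
    rw [hEdef, Set.compl_iInter]
    refine (measure_iUnion_le _).trans ?_
    calc (∑' i : Fin n, ℙ ((X i ⁻¹' (Set.Icc a b))ᶜ))
        ≤ ∑' _ : Fin n, (ENNReal.ofReal p₀ + ENNReal.ofReal p₀) := ENNReal.tsum_le_tsum htail
      _ = (n : ENNReal) * (ENNReal.ofReal p₀ + ENNReal.ofReal p₀) := by
          rw [tsum_fintype, Finset.sum_const, Finset.card_univ, Fintype.card_fin,
            nsmul_eq_mul]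
      _ = ENNReal.ofReal c := by
          rw [← ENNReal.ofReal_add hp0pos.le hp0pos.le, ← ENNReal.ofReal_natCast n,
            ← ENNReal.ofReal_mul (Nat.cast_nonneg n)]
          congr 1
          rw [hc_eq]; ring
  -- conclude
  calc ENNReal.ofReal (1 - c)
      = 1 - ENNReal.ofReal c := by
        rw [ENNReal.ofReal_sub _ (by positivity), ENNReal.ofReal_one]
    _ ≤ 1 - ℙ Eᶜ := tsub_le_tsub_left hEc 1
    _ = ℙ E := by
        rw [prob_compl_eq_one_sub hEmeas]
        exact ENNReal.sub_sub_cancel ENNReal.one_ne_top prob_le_one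
    _ ≤ _ := measure_mono hsub
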